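/- Let x, y, e be vectors in a complex Hilbert space H with ‖e‖ = 1, and let φ : [0,∞) → [0,∞) be a convex increasing continuous function with φ(0) = 0. Then φ(|⟨x, e⟩⟨e, y⟩|) ≤ (1/2)(φ(‖x‖‖y‖) + φ(|⟨x, y⟩|)). -/

import Mathlib

open scoped InnerProductSpace
open Set Filter

variable {H : Type*} [NormedAddCommGroup H] [InnerProductSpace ℂ H] [CompleteSpace H]

/-- The numerical radius of a bounded linear operator. -/
noncomputable def numRad (T : H →L[ℂ] H) : ℝ :=
  ⨆ x : {x : H // ‖x‖ = 1}, ‖(⟪T x, x⟫_ℂ)‖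

/-- The absolute value `|T| = (T*T)^(1/2)` of a bounded linear operator. -/
noncomputable def opAbs (T : H →L[ℂ] H) : H →L[ℂ] H := CFC.sqrt (star T * T)

/-- Buzano's inequality. -/
lemma buzano (x y e : H) (he : ‖e‖ = 1) :
    ‖⟪x, e⟫_ℂ * ⟪e, y⟫_ℂ‖ ≤ (‖x‖ * ‖y‖ + ‖⟪x, y⟫_ℂ‖) / 2 := by
  set p : H := ⟪e, y⟫_ℂ • e with hp
  have hpy : ⟪p, y⟫_ℂ = (‖⟪e, y⟫_ℂ‖ : ℂ) ^ 2 := by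
    rw [hp, inner_smul_left, mul_comm, Complex.mul_conj, Complex.normSq_eq_norm_sq]
    simp
  have hpn : ‖p‖ = ‖⟪e, y⟫_ℂ‖ := by
    rw [hp, norm_smul, he, mul_one]
  have hkey : ‖p - (1/2 : ℂ) • y‖ = ‖y‖ / 2 := by
    have h2 : ‖p - (1/2 : ℂ) • y‖ ^ 2 = (‖y‖ / 2) ^ 2 := by
      rw [@norm_sub_sq ℂ]
      simp [inner_smul_right, hpy, hpn, norm_smul, Complex.ofReal_pow, Complex.mul_re]
      rw [← Complex.ofReal_pow, Complex.ofReal_re]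
      ring
    calc ‖p - (1/2 : ℂ) • y‖ = Real.sqrt (‖p - (1/2 : ℂ) • y‖ ^ 2) :=
          (Real.sqrt_sq (norm_nonneg _)).symm
      _ = Real.sqrt ((‖y‖ / 2) ^ 2) := by rw [h2]
      _ = ‖y‖ / 2 := Real.sqrt_sq (by positivity)
  have hsub : ⟪x, p - (1/2 : ℂ) • y⟫_ℂ = ⟪x, e⟫_ℂ * ⟪e, y⟫_ℂ - (1/2) * ⟪x, y⟫_ℂ := by
    simp [hp, inner_sub_right, inner_smul_right]
    ring
  have hcs := norm_inner_le_norm (𝕜 := ℂ) x (p - (1/2 : ℂ) • y)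
  rw [hsub, hkey] at hcs
  have := norm_sub_norm_le (⟪x, e⟫_ℂ * ⟪e, y⟫_ℂ) ((1/2 : ℂ) * ⟪x, y⟫_ℂ)
  have h12 : ‖(1/2 : ℂ) * ⟪x, y⟫_ℂ‖ = ‖⟪x, y⟫_ℂ‖ / 2 := by
    rw [norm_mul]; simp; ring
  rw [h12] at this
  linarith

theorem stmt0 (φ : ℝ → ℝ) (hφc : ContinuousOn φ (Ici 0))
    (hφconv : ConvexOn ℝ (Ici 0) φ) (hφmono : MonotoneOn φ (Ici 0)) (hφ0 : φ 0 = 0)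
    (x y e : H) (he : ‖e‖ = 1) :
    φ ‖⟪x, e⟫_ℂ * ⟪e, y⟫_ℂ‖ ≤ (1 / 2) * (φ (‖x‖ * ‖y‖) + φ ‖⟪x, y⟫_ℂ‖) := by
  have hb := buzano x y e he
  have ha : (0:ℝ) ≤ ‖x‖ * ‖y‖ := by positivity
  have hbn : (0:ℝ) ≤ ‖⟪x, y⟫_ℂ‖ := norm_nonneg _
  have hmid : (‖x‖ * ‖y‖ + ‖⟪x, y⟫_ℂ‖) / 2 ∈ Ici (0:ℝ) := by
    simp only [mem_Ici]; positivity
  have h1 : φ ‖⟪x, e⟫_ℂ * ⟪e, y⟫_ℂ‖ ≤ φ ((‖x‖ * ‖y‖ + ‖⟪x, y⟫_ℂ‖) / 2) :=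
    hφmono (mem_Ici.mpr (norm_nonneg _)) hmid hb
  have h2 : φ ((‖x‖ * ‖y‖ + ‖⟪x, y⟫_ℂ‖) / 2) ≤
      (1/2) * φ (‖x‖ * ‖y‖) + (1/2) * φ ‖⟪x, y⟫_ℂ‖ := by
    have := hφconv.2 (mem_Ici.mpr ha) (mem_Ici.mpr hbn)
      (by norm_num : (0:ℝ) ≤ (1/2:ℝ)) (by norm_num : (0:ℝ) ≤ (1/2:ℝ)) (by norm_num)
    rw [show (‖x‖ * ‖y‖ + ‖⟪x, y⟫_ℂ‖)/2
        = (1/2:ℝ) • (‖x‖ * ‖y‖) + (1/2:ℝ) • ‖⟪x, y⟫_ℂ‖ by simp [smul_eq_mul]; ring]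
    simpa [smul_eq_mul] using this
  linarith
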